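/- For every k ≥ 1, the class REGA_k of languages regular with some advice over an advice alphabet of size k is strictly contained in REGA_{k+1}. -/

import Mathlib

open Classical

/-- State of a deterministic transducer after `n` steps: `t` maps (state, input
character) to (next state, output character). -/
def transRun {Q Γ S : Type*} (t : Q → Γ → Q × S) (q : Q) (B : ℕ → Γ) : ℕ → Q
  | 0 => q
  | n + 1 => (t (transRun t q B n) (B n)).1

/-- The `n`-th output character of the transducer on infinite input `B`. -/
def transOut {Q Γ S : Type*} (t : Q → Γ → Q × S) (q : Q) (B : ℕ → Γ) (n : ℕ) : S :=
  (t (transRun t q B n) (B n)).2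

/-- The run of an automaton with advice. -/
def advRun {Q S Γ : Type*} (δ : Q → Γ → S → Q) (A : ℕ → Γ) : Q → ℕ → List S → Q
  | q, _, [] => q
  | q, n, a :: w => advRun δ A (δ q (A n) a) (n + 1) w

/-- The language accepted by an automaton with advice. -/
def advAccepts {Q S Γ : Type*} (δ : Q → Γ → S → Q) (A : ℕ → Γ) (q0 : Q) (F : Set Q) :
    Set (List S) :=
  {w | advRun δ A q0 0 w ∈ F}

/-- `REGA_k` over input alphabet `S`: the languages regular with some advice over
an advice alphabet of size `k`. -/
def REGA (k : ℕ) (S : Type*) : Set (Set (List S)) :=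
  {L | ∃ (A : ℕ → Fin k) (Q : Type) (_ : Fintype Q) (δ : Q → Fin k → S → Q)
        (q0 : Q) (F : Set Q), advAccepts δ A q0 F = L}

-- basic lemmas
theorem transRun_congr {Q Γ S : Type*} (t : Q → Γ → Q × S) (q : Q) {B B' : ℕ → Γ} :
    ∀ {n : ℕ}, (∀ i < n, B i = B' i) → transRun t q B n = transRun t q B' n
  | 0, _ => rfl
  | n + 1, h => by
    simp only [transRun, transRun_congr t q (fun i hi => h i (hi.trans (Nat.lt_succ_self n))),
      h n (Nat.lt_succ_self n)]

theorem transOut_congr {Q Γ S : Type*} (t : Q → Γ → Q × S) (q : Q) {B B' : ℕ → Γ} {n : ℕ}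
    (h : ∀ i ≤ n, B i = B' i) : transOut t q B n = transOut t q B' n := by
  unfold transOut
  rw [transRun_congr t q (fun i hi => h i hi.le), h n le_rfl]

theorem advRun_append {Q S Γ : Type*} (δ : Q → Γ → S → Q) (A : ℕ → Γ) :
    ∀ (w v : List S) (q : Q) (n : ℕ),
      advRun δ A q n (w ++ v) = advRun δ A (advRun δ A q n w) (n + w.length) v
  | [], v, q, n => by simp [advRun]
  | a :: w, v, q, n => by
    show advRun δ A (δ q (A n) a) (n + 1) (w ++ v) =
      advRun δ A (advRun δ A (δ q (A n) a) (n + 1) w) (n + (w.length + 1)) v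
    rw [advRun_append δ A w v, Nat.add_right_comm n 1 w.length, Nat.add_assoc]

section Diag
variable (k : ℕ)

theorem bern (k m : ℕ) : (m + k) * k ^ m ≤ k * (k + 1) ^ m := by
  induction m with
  | zero => simp
  | succ m ih =>
    have h1 : (m + 1 + k) * k ^ (m + 1) ≤ (k + 1) * ((m + k) * k ^ m) := by
      ring_nf
      nlinarith [pow_nonneg (Nat.zero_le k) m, Nat.zero_le (k ^ m)]
    calc (m + 1 + k) * k ^ (m + 1) ≤ (k + 1) * ((m + k) * k ^ m) := h1
      _ ≤ (k + 1) * (k * (k + 1) ^ m) := Nat.mul_le_mul_left _ ih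
      _ = k * (k + 1) ^ (m + 1) := by ring

theorem pow_diag (k n : ℕ) (hk : 1 ≤ k) : k ^ (n + k * k ^ n) < (k + 1) ^ (k * k ^ n) := by
  have h := bern k (k * k ^ n)
  have h2 : (k * k ^ n + k) * k ^ (k * k ^ n) = k * ((k ^ n + 1) * k ^ (k * k ^ n)) := by ring
  rw [h2] at h
  have h3 : (k ^ n + 1) * k ^ (k * k ^ n) ≤ (k + 1) ^ (k * k ^ n) :=
    Nat.le_of_mul_le_mul_left h hk
  calc k ^ (n + k * k ^ n) = k ^ n * k ^ (k * k ^ n) := pow_add k n _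
    _ < (k ^ n + 1) * k ^ (k * k ^ n) := by
        have : 0 < k ^ (k * k ^ n) := Nat.pow_pos hk
        exact (Nat.mul_lt_mul_right this).mpr (Nat.lt_succ_self _)
    _ ≤ _ := h3

/-- Trsdducers over input alphabet `Fin k` and output alphabet `Fin (k+1)`,
with state space `Fin m`. -/
def Trsd (k : ℕ) : Type :=
  Σ m : ℕ, (Fin m → Fin k → Fin m × Fin (k + 1)) × Fin m

instance : Countable (Trsd k) := by unfold Trsd; infer_instance

instance : Nonempty (Trsd k) := ⟨⟨1, fun _ _ => (0, 0), 0⟩⟩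

/-- `w` is not a prefix of the output of transducer `T` on any input. -/
def Avoids {k : ℕ} (n : ℕ) (w : Fin n → Fin (k + 1)) (T : Trsd k) : Prop :=
  ∀ B : ℕ → Fin k, ∃ i : Fin n, w i ≠ transOut T.2.1 T.2.2 B i

end Diag

theorem exists_extend {k : ℕ} (hk : 1 ≤ k) (n : ℕ) (w : Fin n → Fin (k + 1)) (T : Trsd k) :
    ∃ m : ℕ, 0 < m ∧ ∃ w' : Fin (n + m) → Fin (k + 1),
      (∀ i : Fin n, w' (Fin.castAdd m i) = w i) ∧ Avoids (n + m) w' T := by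
  obtain ⟨M, t, q0⟩ := T
  set m := k * k ^ n with hm
  set N := n + m with hN
  refine ⟨m, by positivity, ?_⟩
  have key : ∃ u : Fin m → Fin (k + 1), ∀ B : ℕ → Fin k,
      ∃ i : Fin N, Fin.append w u i ≠ transOut t q0 B i := by
    by_contra hcon
    push_neg at hcon
    -- hcon : ∀ u, ∃ B, ∀ i, Fin.append w u i = transOut t q0 B i
    set g : (Fin N → Fin k) → (Fin N → Fin (k + 1)) :=
      fun c i => transOut t q0 (fun j => if h : j < N then c ⟨j, h⟩ else ⟨0, hk⟩) i with hg
    set c : (Fin m → Fin (k + 1)) → (Fin N → Fin k) :=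
      fun u i => (hcon u).choose i with hc
    have hgc : ∀ u, Fin.append w u = g (c u) := by
      intro u
      funext i
      have h1 := (hcon u).choose_spec i
      rw [h1, hg, hc]
      apply transOut_congr
      intro j hj
      have hjN : j < N := lt_of_le_of_lt hj i.isLt
      simp [hjN]
    have cinj : Function.Injective c := by
      intro u u' huu
      have h2 : Fin.append w u = Fin.append w u' := by
        rw [hgc u, hgc u', huu]
      funext i
      have := congrFun h2 (Fin.natAdd n i)
      rwa [Fin.append_right, Fin.append_right] at this
    have hcard := Fintype.card_le_of_injective c cinj
    simp only [Fintype.card_fun, Fintype.card_fin] at hcard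
    exact absurd hcard (not_le.mpr (pow_diag k n hk))
  obtain ⟨u, hu⟩ := key
  exact ⟨Fin.append w u, fun i => Fin.append_left w u i, hu⟩

noncomputable def stage {k : ℕ} (hk : 1 ≤ k) (T : ℕ → Trsd k) :
    ℕ → Σ' n : ℕ, Fin n → Fin (k + 1)
  | 0 => ⟨0, Fin.elim0⟩
  | i + 1 =>
    ⟨(stage hk T i).1 + (exists_extend hk (stage hk T i).1 (stage hk T i).2 (T i)).choose,
      (exists_extend hk (stage hk T i).1 (stage hk T i).2 (T i)).choose_spec.2.choose⟩

theorem stage_succ_spec {k : ℕ} (hk : 1 ≤ k) (T : ℕ → Trsd k) (i : ℕ) :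
    (∀ j : Fin (stage hk T i).1,
        (stage hk T (i + 1)).2
          (Fin.castAdd (exists_extend hk (stage hk T i).1 (stage hk T i).2 (T i)).choose j)
          = (stage hk T i).2 j) ∧
      Avoids (stage hk T (i + 1)).1 (stage hk T (i + 1)).2 (T i) :=
  (exists_extend hk (stage hk T i).1 (stage hk T i).2 (T i)).choose_spec.2.choose_spec

theorem stage_lt_succ {k : ℕ} (hk : 1 ≤ k) (T : ℕ → Trsd k) (i : ℕ) :
    (stage hk T i).1 < (stage hk T (i + 1)).1 :=
  Nat.lt_add_of_pos_right (exists_extend hk (stage hk T i).1 (stage hk T i).2 (T i)).choose_spec.1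

theorem stage_mono {k : ℕ} (hk : 1 ≤ k) (T : ℕ → Trsd k) {i j : ℕ} (h : i ≤ j) :
    (stage hk T i).1 ≤ (stage hk T j).1 := by
  induction j with
  | zero => simp_all
  | succ j ih =>
    rcases Nat.lt_or_ge i (j + 1) with h' | h'
    · exact le_trans (ih (Nat.lt_succ_iff.mp h')) (stage_lt_succ hk T j).le
    · have : i = j + 1 := le_antisymm h h'
      simp [this]

theorem stage_ge {k : ℕ} (hk : 1 ≤ k) (T : ℕ → Trsd k) (i : ℕ) : i ≤ (stage hk T i).1 := by
  induction i with
  | zero => exact Nat.zero_le _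
  | succ i ih => exact Nat.lt_of_le_of_lt ih (stage_lt_succ hk T i)

theorem stage_succ_prefix {k : ℕ} (hk : 1 ≤ k) (T : ℕ → Trsd k) (i p : ℕ)
    (h1 : p < (stage hk T i).1) (h2 : p < (stage hk T (i + 1)).1) :
    (stage hk T (i + 1)).2 ⟨p, h2⟩ = (stage hk T i).2 ⟨p, h1⟩ := by
  have h := (stage_succ_spec hk T i).1 ⟨p, h1⟩
  have he : Fin.castAdd (exists_extend hk (stage hk T i).1 (stage hk T i).2 (T i)).choose
      (⟨p, h1⟩ : Fin (stage hk T i).1) = ⟨p, h2⟩ := by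
    apply Fin.ext
    simp
  rwa [he] at h

theorem stage_prefix {k : ℕ} (hk : 1 ≤ k) (T : ℕ → Trsd k) {i j : ℕ} (h : i ≤ j) (p : ℕ)
    (h1 : p < (stage hk T i).1) (h2 : p < (stage hk T j).1) :
    (stage hk T j).2 ⟨p, h2⟩ = (stage hk T i).2 ⟨p, h1⟩ := by
  induction j with
  | zero =>
    have : i = 0 := Nat.le_zero.mp h
    subst this
    rfl
  | succ j ih =>
    rcases Nat.lt_or_ge i (j + 1) with h' | h'
    · have hij : i ≤ j := Nat.lt_succ_iff.mp h'
      have h2' : p < (stage hk T j).1 := lt_of_lt_of_le h1 (stage_mono hk T hij)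
      rw [stage_succ_prefix hk T j p h2' h2]
      exact ih hij h2'
    · have : i = j + 1 := le_antisymm h h'
      subst this
      rfl

noncomputable def diagA {k : ℕ} (hk : 1 ≤ k) (T : ℕ → Trsd k) (p : ℕ) : Fin (k + 1) :=
  (stage hk T (p + 1)).2 ⟨p, Nat.lt_of_lt_of_le (Nat.lt_succ_self p) (stage_ge hk T (p + 1))⟩

theorem stage_val {k : ℕ} (hk : 1 ≤ k) (T : ℕ → Trsd k) (i p : ℕ)
    (h1 : p < (stage hk T i).1) : (stage hk T i).2 ⟨p, h1⟩ = diagA hk T p := by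
  unfold diagA
  rcases le_total i (p + 1) with h | h
  · exact (stage_prefix hk T h p h1 _).symm
  · exact stage_prefix hk T h p _ h1

theorem diagA_spec {k : ℕ} (hk : 1 ≤ k) (T : ℕ → Trsd k) (hT : Function.Surjective T)
    (T' : Trsd k) (B : ℕ → Fin k) :
    ∃ p : ℕ, transOut T'.2.1 T'.2.2 B p ≠ diagA hk T p := by
  obtain ⟨i, rfl⟩ := hT T'
  obtain ⟨idx, hidx⟩ := (stage_succ_spec hk T i).2 B
  refine ⟨idx.val, fun hcontra => hidx ?_⟩
  have h1 : ((⟨idx.val, idx.isLt⟩ : Fin (stage hk T (i + 1)).1)) = idx := Fin.ext rfl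
  rw [← h1, stage_val hk T (i + 1) idx.val idx.isLt, ← hcontra, h1]

/-- The set of finite prefixes of the infinite word `A`. -/
def PrefSet {S : Type*} (A : ℕ → S) : Set (List S) :=
  {w | ∀ (i : ℕ) (h : i < w.length), w[i]'h = A i}

def pre {S : Type*} (A : ℕ → S) (n : ℕ) : List S := List.ofFn (fun i : Fin n => A i)

theorem pre_length {S : Type*} (A : ℕ → S) (n : ℕ) : (pre A n).length = n := by
  simp [pre]

theorem pre_mem {S : Type*} (A : ℕ → S) (n : ℕ) : pre A n ∈ PrefSet A := by
  intro i h
  rw [pre_length] at h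
  simp [pre, List.getElem_ofFn]

theorem pre_succ {S : Type*} (A : ℕ → S) (n : ℕ) : pre A (n + 1) = pre A n ++ [A n] := by
  unfold pre
  rw [List.ofFn_succ']
  simp [List.concat_eq_append, Fin.castSucc]

theorem pre_append_mem {S : Type*} (A : ℕ → S) (n : ℕ) (s : S) :
    pre A n ++ [s] ∈ PrefSet A ↔ s = A n := by
  constructor
  · intro h
    have hl : n < (pre A n ++ [s]).length := by simp [pre_length]
    have := h n hl
    rw [List.getElem_append_right (by rw [pre_length])] at this
    simpa using this
  · rintro rfl
    rw [← pre_succ]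
    exact pre_mem A (n + 1)

theorem falseRun {S : Type*} [DecidableEq S] (A : ℕ → S) :
    ∀ (w : List S) (n : ℕ),
      advRun (fun (b : Bool) (g s : S) => b && decide (s = g)) A false n w = false
  | [], _ => rfl
  | a :: w, n => by
    simp only [advRun, Bool.false_and]
    exact falseRun A w (n + 1)

theorem trueRun {S : Type*} [DecidableEq S] (A : ℕ → S) :
    ∀ (w : List S) (n : ℕ),
      advRun (fun (b : Bool) (g s : S) => b && decide (s = g)) A true n w = true ↔
        ∀ (i : ℕ) (h : i < w.length), w[i]'h = A (n + i)
  | [], n => by simp [advRun]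
  | a :: w, n => by
    show advRun _ A (true && decide (a = A n)) (n + 1) w = true ↔ _
    by_cases ha : a = A n
    · rw [decide_eq_true ha, Bool.true_and, trueRun A w (n + 1)]
      constructor
      · intro h i hi
        match i with
        | 0 => simpa using ha
        | Nat.succ j =>
          have hj : j < w.length := by simpa using hi
          have := h j hj
          simpa [Nat.add_assoc, Nat.add_comm 1 j] using this
      · intro h j hj
        have hj' : j + 1 < (a :: w).length := by simpa using hj
        have := h (j + 1) hj'
        simpa [Nat.add_assoc, Nat.add_comm 1 j] using this
    · rw [decide_eq_false ha, Bool.and_false, falseRun]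
      simp only [Bool.false_eq_true, false_iff]
      intro h
      exact ha (h 0 (by simp))

theorem prefSet_mem_REGA (k : ℕ) (A : ℕ → Fin (k + 1)) :
    PrefSet A ∈ REGA (k + 1) (Fin (k + 1)) := by
  refine ⟨A, Bool, inferInstance, fun b g s => b && decide (s = g), true, {b | b = true}, ?_⟩
  ext w
  simp only [advAccepts, Set.mem_setOf_eq, PrefSet]
  rw [trueRun A w 0]
  simp

theorem pref_not_REGA {k : ℕ} (hk : 1 ≤ k) (A : ℕ → Fin (k + 1))
    (hA : ∀ (T' : Trsd k) (B : ℕ → Fin k), ∃ p : ℕ, transOut T'.2.1 T'.2.2 B p ≠ A p) :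
    PrefSet A ∉ REGA k (Fin (k + 1)) := by
  rintro ⟨B, Q, hQ, δ, q0, F, hacc⟩
  haveI := hQ
  set qn : ℕ → Q := fun n => advRun δ B q0 0 (pre A n) with hqn
  have h2 : ∀ (n : ℕ) (s : Fin (k + 1)),
      advRun δ B q0 0 (pre A n ++ [s]) = δ (qn n) (B n) s := by
    intro n s
    rw [advRun_append δ B (pre A n) [s] q0 0, pre_length]
    simp [advRun, hqn]
  have hstep : ∀ (n : ℕ) (s : Fin (k + 1)), δ (qn n) (B n) s ∈ F ↔ s = A n := by
    intro n s
    have h3 : (δ (qn n) (B n) s ∈ F) ↔ (pre A n ++ [s]) ∈ PrefSet A := by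
      rw [← hacc]
      show _ ↔ advRun δ B q0 0 (pre A n ++ [s]) ∈ F
      rw [h2 n s]
    rw [h3, pre_append_mem]
  set out : Q → Fin k → Fin (k + 1) :=
    fun q g => if h : ∃ s, δ q g s ∈ F then h.choose else 0 with hout_def
  set t : Q → Fin k → Q × Fin (k + 1) := fun q g => (δ q g (out q g), out q g) with ht_def
  have hout : ∀ n, out (qn n) (B n) = A n := by
    intro n
    have hex : ∃ s, δ (qn n) (B n) s ∈ F := ⟨A n, (hstep n (A n)).mpr rfl⟩
    rw [hout_def]
    simp only [dif_pos hex]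
    exact (hstep n _).mp hex.choose_spec
  have hrun : ∀ n, transRun t q0 B n = qn n := by
    intro n
    induction n with
    | zero =>
      show q0 = advRun δ B q0 0 (pre A 0)
      simp [pre, List.ofFn_zero, advRun]
    | succ n ih =>
      show (t (transRun t q0 B n) (B n)).1 = qn (n + 1)
      rw [ih, ht_def]
      show δ (qn n) (B n) (out (qn n) (B n)) = qn (n + 1)
      rw [hout n, hqn]
      show _ = advRun δ B q0 0 (pre A (n + 1))
      rw [pre_succ, h2 n (A n)]
  have houtSeq : ∀ n, transOut t q0 B n = A n := by
    intro n
    show (t (transRun t q0 B n) (B n)).2 = A n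
    rw [hrun n, ht_def]
    exact hout n
  -- transport to Fin (card Q)
  let e : Q ≃ Fin (Fintype.card Q) := Fintype.equivFin Q
  set t' : Fin (Fintype.card Q) → Fin k → Fin (Fintype.card Q) × Fin (k + 1) :=
    fun q' g => (e (t (e.symm q') g).1, (t (e.symm q') g).2) with ht'
  have hrun' : ∀ n, transRun t' (e q0) B n = e (transRun t q0 B n) := by
    intro n
    induction n with
    | zero => rfl
    | succ n ih =>
      show (t' (transRun t' (e q0) B n) (B n)).1 = e (t (transRun t q0 B n) (B n)).1
      rw [ih, ht']
      simp [Equiv.symm_apply_apply]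
  have hout' : ∀ n, transOut t' (e q0) B n = transOut t q0 B n := by
    intro n
    show (t' (transRun t' (e q0) B n) (B n)).2 = (t (transRun t q0 B n) (B n)).2
    rw [hrun' n, ht']
    simp [Equiv.symm_apply_apply]
  obtain ⟨p, hp⟩ := hA ⟨Fintype.card Q, t', e q0⟩ B
  exact hp ((hout' p).trans (houtSeq p))

theorem REGA_mono {k : ℕ} (hk : 1 ≤ k) (S : Type*) : REGA k S ⊆ REGA (k + 1) S := by
  rintro L ⟨A, Q, hQ, δ, q0, F, hacc⟩
  set ret : Fin (k + 1) → Fin k := fun g => if h : (g : ℕ) < k then ⟨g, h⟩ else ⟨0, hk⟩ with hret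
  refine ⟨fun n => Fin.castSucc (A n), Q, hQ, fun q g s => δ q (ret g) s, q0, F, ?_⟩
  rw [← hacc]
  have key : ∀ (w : List S) (q : Q) (n : ℕ),
      advRun (fun q g s => δ q (ret g) s) (fun n => Fin.castSucc (A n)) q n w =
        advRun δ A q n w := by
    intro w
    induction w with
    | nil => intro q n; rfl
    | cons a w ih =>
      intro q n
      show advRun _ _ (δ q (ret (Fin.castSucc (A n))) a) (n + 1) w = _
      have hr : ret (Fin.castSucc (A n)) = A n := by
        rw [hret]
        simp only [Fin.coe_castSucc, Fin.is_lt, dif_pos]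
      rw [hr, ih]
      rfl
  unfold advAccepts
  ext w
  simp only [Set.mem_setOf_eq, key]


/-- For every `k ≥ 1`, `REGA_k` is strictly contained in `REGA_{k+1}`. -/
theorem REGA_strict_hierarchy (k : ℕ) (hk : 1 ≤ k) :
    REGA k (Fin (k + 1)) ⊂ REGA (k + 1) (Fin (k + 1)) := by
  obtain ⟨T, hT⟩ := exists_surjective_nat (Trsd k)
  rw [Set.ssubset_def]
  refine ⟨REGA_mono hk _, fun hsub => ?_⟩
  exact pref_not_REGA hk (diagA hk T) (fun T' B => diagA_spec hk T hT T' B)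
    (hsub (prefSet_mem_REGA k (diagA hk T)))
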